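/- arXiv:2009.06031 — 5 statements merged into one kernel-verified Lean document; each statement's English description precedes it below -/
import Mathlib

section
/- For every x ∈ X₀ there exists k ∈ ℕ such that x is constant on the left tail and constant on the right tail: x(i) = x(-k) for all integers i ≤ -k, and x(i) = x(k) for all integers i ≥ k. -/
/-- `x` contains the forbidden word `1 0^m 1^n 0` at position `i` (for `m, n ≥ 1`). -/
def ContainsForbidden (x : ℤ → Bool) (i m n : ℤ) : Prop :=
  x i = true ∧ (∀ j : ℤ, 1 ≤ j → j ≤ m → x (i + j) = false) ∧
    (∀ j : ℤ, 1 ≤ j → j ≤ n → x (i + m + j) = true) ∧ x (i + m + n + 1) = false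

/-- The subshift `X₀`: points containing no forbidden word `1 0^m 1^n 0`, `m, n ≥ 1`. -/
def X0 : Set (ℤ → Bool) :=
  {x | ∀ i m n : ℤ, 1 ≤ m → 1 ≤ n → ¬ ContainsForbidden x i m n}

/-- After an occurrence of `1 0^m 1`, everything is `1`. -/
lemma tail_true (x : ℤ → Bool) (hx : x ∈ X0) (c m : ℤ) (hm : 1 ≤ m)
    (hc : x c = true) (hz : ∀ j : ℤ, 1 ≤ j → j ≤ m → x (c + j) = false)
    (h1 : x (c + m + 1) = true) : ∀ j : ℤ, c + m + 1 ≤ j → x j = true := by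
  by_contra h
  push_neg at h
  obtain ⟨j0, hj0, hj0f⟩ := h
  obtain ⟨j, ⟨hjge, hjf⟩, hjle⟩ :=
    Int.exists_least_of_bdd (P := fun j => c + m + 1 ≤ j ∧ x j ≠ true)
      ⟨c + m + 1, fun z hz => hz.1⟩ ⟨j0, hj0, hj0f⟩
  have hjne : j ≠ c + m + 1 := by
    intro hEq; exact hjf (hEq ▸ h1)
  set n := j - (c + m) - 1 with hn
  have hn1 : 1 ≤ n := by omega
  apply hx c m n hm hn1
  refine ⟨hc, hz, ?_, ?_⟩
  · intro i hi1 hin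
    by_contra hv
    have := hjle _ ⟨by omega, hv⟩
    omega
  · have hEq : c + m + n + 1 = j := by omega
    rw [hEq]
    cases hxj : x j with
    | false => rfl
    | true => exact absurd hxj hjf

lemma right_tail (x : ℤ → Bool) (hx : x ∈ X0) :
    ∃ K : ℤ, ∀ i : ℤ, K ≤ i → x i = x K := by
  by_cases hA : ∃ N : ℤ, ∀ i, N ≤ i → x i = false
  · obtain ⟨N, hN⟩ := hA
    exact ⟨N, fun i hi => (hN i hi).trans (hN N le_rfl).symm⟩
  push_neg at hA
  have hA' : ∀ N : ℤ, ∃ i, N ≤ i ∧ x i = true := by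
    intro N
    obtain ⟨i, hi, hne⟩ := hA N
    exact ⟨i, hi, by simpa using hne⟩
  by_cases hB : ∃ a b : ℤ, a < b ∧ x a = true ∧ x b = false
  · obtain ⟨a, b, hab, ha, hb⟩ := hB
    obtain ⟨c, ⟨hcb, hct⟩, hcmax⟩ :=
      Int.exists_greatest_of_bdd (P := fun z => z < b ∧ x z = true)
        ⟨b, fun z hz => le_of_lt hz.1⟩ ⟨a, hab, ha⟩
    obtain ⟨i1, hi1, hi1t⟩ := hA' (b + 1)
    obtain ⟨d, ⟨hdb, hdt⟩, hdmin⟩ :=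
      Int.exists_least_of_bdd (P := fun z => b + 1 ≤ z ∧ x z = true)
        ⟨b + 1, fun z hz => hz.1⟩ ⟨i1, hi1, hi1t⟩
    set m := d - c - 1 with hm
    have hm1 : 1 ≤ m := by omega
    have hz : ∀ j : ℤ, 1 ≤ j → j ≤ m → x (c + j) = false := by
      intro j hj1 hjm
      by_contra hv
      have hv' : x (c + j) = true := by simpa using hv
      rcases lt_trichotomy (c + j) b with h | h | h
      · have := hcmax _ ⟨h, hv'⟩; omega
      · rw [h] at hv'; rw [hv'] at hb; exact absurd hb (by simp)
      · have := hdmin _ ⟨by omega, hv'⟩; omega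
    have h1 : x (c + m + 1) = true := by
      have hEq : c + m + 1 = d := by omega
      rw [hEq]; exact hdt
    have htail := tail_true x hx c m hm1 hct hz h1
    refine ⟨c + m + 1, fun i hi => ?_⟩
    rw [htail i hi, htail _ le_rfl]
  · push_neg at hB
    obtain ⟨a, _, ha⟩ := hA' 0
    refine ⟨a, fun i hi => ?_⟩
    rcases eq_or_lt_of_le hi with h | h
    · rw [h]
    · have := hB a i h ha
      rw [ha]
      cases hxi : x i with
      | false => exact absurd hxi this
      | true => rfl

lemma left_tail (x : ℤ → Bool) (hx : x ∈ X0) :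
    ∃ K : ℤ, ∀ i : ℤ, i ≤ K → x i = x K := by
  by_cases hA : ∃ N : ℤ, ∀ i, i ≤ N → x i = false
  · obtain ⟨N, hN⟩ := hA
    exact ⟨N, fun i hi => (hN i hi).trans (hN N le_rfl).symm⟩
  by_cases hB : ∃ N : ℤ, ∀ i, i ≤ N → x i = true
  · obtain ⟨N, hN⟩ := hB
    exact ⟨N, fun i hi => (hN i hi).trans (hN N le_rfl).symm⟩
  exfalso
  push_neg at hA hB
  have h1 : ∀ N : ℤ, ∃ i, i ≤ N ∧ x i = true := by
    intro N
    obtain ⟨i, hi, hne⟩ := hA N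
    exact ⟨i, hi, by simpa using hne⟩
  have h0 : ∀ N : ℤ, ∃ i, i ≤ N ∧ x i = false := by
    intro N
    obtain ⟨i, hi, hne⟩ := hB N
    exact ⟨i, hi, by simpa using hne⟩
  -- a false position s
  obtain ⟨s, _, hs⟩ := h0 0
  -- greatest true position c below s
  obtain ⟨a1, ha1, ha1t⟩ := h1 (s - 1)
  obtain ⟨c, ⟨hcs, hct⟩, hcmax⟩ :=
    Int.exists_greatest_of_bdd (P := fun z => z < s ∧ x z = true)
      ⟨s, fun z hz => le_of_lt hz.1⟩ ⟨a1, by omega, ha1t⟩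
  have hc1 : x (c + 1) = false := by
    rcases eq_or_lt_of_le (by omega : c + 1 ≤ s) with h | h
    · rw [h]; exact hs
    · by_contra hv
      have hv' : x (c + 1) = true := by simpa using hv
      have := hcmax _ ⟨h, hv'⟩; omega
  -- a false position below c
  obtain ⟨z0, hz0, hz0f⟩ := h0 (c - 1)
  -- least start b of the block of trues ending at c
  obtain ⟨b, ⟨hbc, hbt⟩, hbmin⟩ :=
    Int.exists_least_of_bdd (P := fun z => z ≤ c ∧ ∀ j : ℤ, z ≤ j → j ≤ c → x j = true)
      ⟨z0 + 1, fun z hz => by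
        by_contra hzz
        have : x z0 = true := hz.2 z0 (by omega) (by omega)
        rw [this] at hz0f; exact absurd hz0f (by simp)⟩
      ⟨c, le_rfl, fun j hj1 hj2 => by
        have : j = c := le_antisymm hj2 hj1
        rw [this]; exact hct⟩
  have hb1 : x (b - 1) = false := by
    by_contra hv
    have hv' : x (b - 1) = true := by simpa using hv
    have hPb1 : b - 1 ≤ c ∧ ∀ j : ℤ, b - 1 ≤ j → j ≤ c → x j = true := by
      refine ⟨by omega, fun j hj1 hj2 => ?_⟩
      rcases eq_or_lt_of_le hj1 with h | h
      · rw [← h]; exact hv'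
      · exact hbt j (by omega) hj2
    have := hbmin _ hPb1; omega
  -- greatest true position a below b
  obtain ⟨a2, ha2, ha2t⟩ := h1 (b - 1)
  have ha2' : a2 ≤ b - 2 := by
    rcases eq_or_lt_of_le ha2 with h | h
    · rw [h] at ha2t; rw [ha2t] at hb1; exact absurd hb1 (by simp)
    · omega
  obtain ⟨a, ⟨hab, hat⟩, hamax⟩ :=
    Int.exists_greatest_of_bdd (P := fun z => z ≤ b - 1 ∧ x z = true)
      ⟨b - 1, fun z hz => hz.1⟩ ⟨a2, by omega, ha2t⟩
  have hab' : a ≤ b - 2 := by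
    rcases eq_or_lt_of_le hab with h | h
    · rw [h] at hat; rw [hat] at hb1; exact absurd hb1 (by simp)
    · omega
  set m := b - a - 1 with hmdef
  set n := c - b + 1 with hndef
  have hm1 : 1 ≤ m := by omega
  have hn1 : 1 ≤ n := by omega
  apply hx a m n hm1 hn1
  refine ⟨hat, ?_, ?_, ?_⟩
  · intro j hj1 hjm
    by_contra hv
    have hv' : x (a + j) = true := by simpa using hv
    have := hamax _ ⟨by omega, hv'⟩; omega
  · intro j hj1 hjn
    exact hbt (a + m + j) (by omega) (by omega)
  · have hEq : a + m + n + 1 = c + 1 := by omega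
    rw [hEq]; exact hc1

/-- Every point of `X₀` is eventually constant on the left tail and on the right tail. -/
theorem X0_eventually_constant_tails :
    ∀ x ∈ X0, ∃ k : ℕ,
      (∀ i : ℤ, i ≤ -(k : ℤ) → x i = x (-(k : ℤ))) ∧
      (∀ i : ℤ, (k : ℤ) ≤ i → x i = x (k : ℤ)) := by
  intro x hx
  obtain ⟨L, hL⟩ := left_tail x hx
  obtain ⟨R, hR⟩ := right_tail x hx
  refine ⟨(max (-L) R).toNat, ?_, ?_⟩
  · have hk : -((max (-L) R).toNat : ℤ) ≤ L := by
      have := Int.self_le_toNat (max (-L) R)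
      have := le_max_left (-L) R
      omega
    intro i hi
    rw [hL i (by omega), hL _ hk]
  · have hk : R ≤ ((max (-L) R).toNat : ℤ) := by
      have := Int.self_le_toNat (max (-L) R)
      have := le_max_right (-L) R
      omega
    intro i hi
    rw [hR i (by omega), hR _ hk]
end

section
/- For every x ∈ X₀ there exists v ∈ {0,1} such that the orbit σ^n x converges, as n → ∞, to the constant sequence with value v in the product topology. Consequently, the only ω-limit points of the system (X₀, σ) are the two constant sequences ⋯000⋯ and ⋯111⋯. -/
open Filter Topology

/-- The left shift on `{0,1}^ℤ`: `(σ x)(i) = x(i+1)`. -/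
def shiftMap (x : ℤ → Bool) : ℤ → Bool := fun i => x (i + 1)

lemma shift_iter : ∀ (n : ℕ) (x : ℤ → Bool) (i : ℤ), shiftMap^[n] x i = x (i + n) := by
  intro n
  induction n with
  | zero => intro x i; simp
  | succ n ih =>
    intro x i
    rw [Function.iterate_succ_apply]
    rw [ih (shiftMap x) i]
    show x (i + n + 1) = x (i + (n + 1 : ℕ))
    congr 1
    push_cast
    ring

lemma descent (x : ℤ → Bool) : ∀ k : ℕ, ∀ p : ℤ, x p = true → x (p + (k : ℤ) + 1) = false →
    ∃ q : ℤ, p ≤ q ∧ x q = true ∧ x (q + 1) = false := by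
  intro k
  induction k with
  | zero => intro p hp h; exact ⟨p, le_refl _, hp, by simpa using h⟩
  | succ k ih =>
    intro p hp h
    by_cases hk : x (p + (k : ℤ) + 1) = true
    · refine ⟨p + (k : ℤ) + 1, by omega, hk, ?_⟩
      have he : p + (k : ℤ) + 1 + 1 = p + ((k + 1 : ℕ) : ℤ) + 1 := by push_cast; ring
      rw [he]; exact h
    · simp only [Bool.not_eq_true] at hk
      exact ih p hp hk

lemma eventually_const (x : ℤ → Bool) (hx : x ∈ X0) :
    ∃ v : Bool, ∃ N : ℤ, ∀ i : ℤ, N ≤ i → x i = v := by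
  classical
  by_cases h0 : ∃ N : ℤ, ∀ i, N ≤ i → x i = false
  · obtain ⟨N, hN⟩ := h0; exact ⟨false, N, hN⟩
  by_cases h1 : ∃ N : ℤ, ∀ i, N ≤ i → x i = true
  · obtain ⟨N, hN⟩ := h1; exact ⟨true, N, hN⟩
  exfalso
  push_neg at h0 h1
  simp only [Bool.not_eq_false] at h0
  simp only [Bool.not_eq_true] at h1
  -- h0 : ∀ N, ∃ i, N ≤ i ∧ x i = true ; h1 : ∀ N, ∃ i, N ≤ i ∧ x i = false
  obtain ⟨p0, _, hp0⟩ := h0 0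
  obtain ⟨q0, hq0le, hq0⟩ := h1 (p0 + 1)
  have hcast : p0 + ((q0 - p0 - 1).toNat : ℤ) + 1 = q0 := by omega
  obtain ⟨p, hpp0, hp, hp1⟩ := descent x (q0 - p0 - 1).toNat p0 hp0 (by rw [hcast]; exact hq0)
  -- first true after p+1
  obtain ⟨t, htle, ht⟩ := h0 (p + 2)
  have hPex : ∃ m : ℕ, 2 ≤ m ∧ x (p + (m : ℤ)) = true := by
    refine ⟨(t - p).toNat, by omega, ?_⟩
    have : p + ((t - p).toNat : ℤ) = t := by omega
    rw [this]; exact ht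
  set m := Nat.find hPex with hm_def
  have hm : 2 ≤ m ∧ x (p + (m : ℤ)) = true := Nat.find_spec hPex
  have hmin : ∀ j < m, ¬ (2 ≤ j ∧ x (p + (j : ℤ)) = true) := fun j hj => Nat.find_min hPex hj
  -- first false after p+m
  obtain ⟨s, hsle, hs⟩ := h1 (p + (m : ℤ) + 1)
  have hQex : ∃ n : ℕ, 1 ≤ n ∧ x (p + (m : ℤ) + (n : ℤ)) = false := by
    refine ⟨(s - p - m).toNat, by omega, ?_⟩
    have : p + (m : ℤ) + ((s - p - m).toNat : ℤ) = s := by omega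
    rw [this]; exact hs
  set n := Nat.find hQex with hn_def
  have hn : 1 ≤ n ∧ x (p + (m : ℤ) + (n : ℤ)) = false := Nat.find_spec hQex
  have hnmin : ∀ j < n, ¬ (1 ≤ j ∧ x (p + (m : ℤ) + (j : ℤ)) = false) :=
    fun j hj => Nat.find_min hQex hj
  refine hx p ((m : ℤ) - 1) (n : ℤ) (by omega) (by exact_mod_cast hn.1) ⟨hp, ?_, ?_, ?_⟩
  · intro j hj1 hjm
    rcases eq_or_lt_of_le hj1 with h | h
    · rw [← h]; exact hp1
    · have hj2 : 2 ≤ j := by omega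
      have hjlt : j.toNat < m := by omega
      have := hmin j.toNat hjlt
      rw [not_and] at this
      have h2 := this (by omega)
      have he : p + j = p + (j.toNat : ℤ) := by omega
      rw [he]
      simpa using h2
  · intro j hj1 hjn
    have he : p + ((m : ℤ) - 1) + j = p + (m : ℤ) + (j - 1) := by ring
    rw [he]
    rcases eq_or_lt_of_le hj1 with h | h
    · have : p + (m : ℤ) + (j - 1) = p + (m : ℤ) := by omega
      rw [this]; exact hm.2
    · have hjlt : (j - 1).toNat < n := by omega
      have := hnmin (j - 1).toNat hjlt
      rw [not_and] at this
      have h2 := this (by omega)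
      have he2 : p + (m : ℤ) + (j - 1) = p + (m : ℤ) + (((j - 1).toNat : ℤ)) := by omega
      rw [he2]
      simpa using h2
  · have he : p + ((m : ℤ) - 1) + (n : ℤ) + 1 = p + (m : ℤ) + (n : ℤ) := by ring
    rw [he]; exact hn.2

/-- Every orbit in `X₀` converges to one of the two constant points, and consequently the
only ω-limit points of `(X₀, σ)` are the constant sequences `⋯000⋯` and `⋯111⋯`. -/
theorem X0_orbits_converge_to_constants :
    (∀ x ∈ X0, ∃ v : Bool,
      Tendsto (fun n : ℕ => shiftMap^[n] x) atTop (𝓝 (fun _ : ℤ => v))) ∧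
    (∀ x ∈ X0, ∀ y : ℤ → Bool,
      MapClusterPt y atTop (fun n : ℕ => shiftMap^[n] x) →
        y = (fun _ : ℤ => false) ∨ y = (fun _ : ℤ => true)) := by
  have key : ∀ x ∈ X0, ∃ v : Bool,
      Tendsto (fun n : ℕ => shiftMap^[n] x) atTop (𝓝 (fun _ : ℤ => v)) := by
    intro x hx
    obtain ⟨v, N, hN⟩ := eventually_const x hx
    refine ⟨v, ?_⟩
    rw [tendsto_pi_nhds]
    intro i
    apply tendsto_nhds_of_eventually_eq
    filter_upwards [Filter.eventually_ge_atTop (N - i).toNat] with k hk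
    rw [shift_iter]
    exact hN _ (by omega)
  refine ⟨key, ?_⟩
  intro x hx y hy
  obtain ⟨v, hv⟩ := key x hx
  have hyv : y = (fun _ : ℤ => v) := by
    have h1 : ClusterPt y (Filter.map (fun n : ℕ => shiftMap^[n] x) atTop) := hy
    exact eq_of_nhds_neBot (h1.mono hv)
  cases v
  · left; exact hyv
  · right; exact hyv
end

section
/- The point x⁰ is a non-wandering point of the shift σ on X₀: for every open set U of {0,1}^ℤ containing x⁰ and every N ∈ ℕ, there exist an integer n > N and a point y ∈ U ∩ X₀ such that σ^n y ∈ U ∩ X₀. -/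
/-- The point `x⁰ = ⋯000.111⋯`. -/
def xZero : ℤ → Bool := fun i => decide (0 ≤ i)

/-- Auxiliary point: `0^∞ 1^(n-K) 0^K 1^∞`. -/
def auxPt (n K : ℤ) : ℤ → Bool := fun i => decide ((0 ≤ i ∧ i < n - K) ∨ n ≤ i)

lemma auxPt_mem_X0 (n K : ℤ) : auxPt n K ∈ X0 := by
  intro i m n' hm hn' ⟨h1, h2, h3, h4⟩
  have e1 := h2 1 le_rfl hm
  have e2 := h3 n' hn' le_rfl
  simp only [auxPt, decide_eq_true_eq, decide_eq_false_iff_not] at h1 h4 e1 e2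
  omega

lemma shiftMap_iter (n : ℕ) (x : ℤ → Bool) (i : ℤ) :
    (shiftMap^[n] x) i = x (i + n) := by
  induction n generalizing x i with
  | zero => simp
  | succ k ih =>
    rw [Function.iterate_succ_apply, ih]
    simp only [shiftMap]
    congr 1
    push_cast
    ring

lemma X0_shift {x : ℤ → Bool} (hx : x ∈ X0) : shiftMap x ∈ X0 := by
  intro i m n hm hn ⟨h1, h2, h3, h4⟩
  refine hx (i + 1) m n hm hn ⟨h1, fun j a b => ?_, fun j a b => ?_, ?_⟩
  · have := h2 j a b; simp only [shiftMap] at this; convert this using 2; ring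
  · have := h3 j a b; simp only [shiftMap] at this; convert this using 2; ring
  · simp only [shiftMap] at h4; convert h4 using 2; ring

lemma X0_shift_iter {x : ℤ → Bool} (hx : x ∈ X0) (n : ℕ) : shiftMap^[n] x ∈ X0 := by
  induction n with
  | zero => simpa
  | succ k ih => rw [Function.iterate_succ_apply']; exact X0_shift ih

/-- `x⁰` is a non-wandering point of the shift on `X₀`. -/
theorem xZero_nonwandering :
    ∀ U : Set (ℤ → Bool), IsOpen U → xZero ∈ U → ∀ N : ℕ,
      ∃ n : ℕ, N < n ∧ ∃ y ∈ U ∩ X0, shiftMap^[n] y ∈ U ∩ X0 := by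
  intro U hU hx N
  obtain ⟨I, u, hIu, hsub⟩ := isOpen_pi_iff.mp hU xZero hx
  set K : ℕ := I.sup Int.natAbs with hK
  have hbound : ∀ i ∈ I, i.natAbs ≤ K := fun i hi => Finset.le_sup hi
  set n : ℕ := 2 * K + N + 1 with hn
  refine ⟨n, by omega, auxPt n K, ⟨?_, auxPt_mem_X0 n K⟩, ?_, X0_shift_iter (auxPt_mem_X0 n K) n⟩
  · apply hsub
    intro i hi
    have hb := hbound i hi
    have : auxPt n K i = xZero i := by
      simp only [auxPt, xZero, decide_eq_decide]
      omega
    rw [this]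
    exact (hIu i hi).2
  · apply hsub
    intro i hi
    have hb := hbound i hi
    have : (shiftMap^[n] (auxPt n K)) i = xZero i := by
      rw [shiftMap_iter]
      simp only [auxPt, xZero, decide_eq_decide]
      omega
    rw [this]
    exact (hIu i hi).2
end

section
/- The point x⁰ is not a limit point of the system (X₀, σ): for every x ∈ X₀, x⁰ is not an ω-limit point of x, i.e. x⁰ is not a cluster point of the sequence (σ^n x)_{n∈ℕ} as n → ∞. -/
open Filter Topology

lemma iterate_shiftMap (x : ℤ → Bool) : ∀ (n : ℕ) (i : ℤ), shiftMap^[n] x i = x (i + n) := by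
  intro n
  induction n with
  | zero => intro i; simp
  | succ n ih =>
    intro i
    rw [Function.iterate_succ_apply']
    show (shiftMap^[n] x) (i + 1) = _
    rw [ih]
    congr 1
    push_cast
    ring

/-- Core combinatorial lemma: a point of `X₀` cannot contain `1 ⋯ 0 ⋯ 1 ⋯ 0`. -/
lemma no_1010 (x : ℤ → Bool) (hx : x ∈ X0) (a b c d : ℤ)
    (hab : a < b) (hbc : b < c) (hcd : c < d)
    (ha : x a = true) (hb : x b = false) (hc : x c = true) (hd : x d = false) : False := by
  -- greatest i ≤ b with x i = true
  obtain ⟨i, ⟨hib, hi1⟩, hmax⟩ :=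
    Int.exists_greatest_of_bdd (P := fun j => j ≤ b ∧ x j = true)
      ⟨b, fun z hz => hz.1⟩ ⟨a, le_of_lt hab, ha⟩
  have hib' : i < b := lt_of_le_of_ne hib (by rintro rfl; rw [hb] at hi1; exact absurd hi1 (by simp))
  -- least c' ≥ b with x c' = true
  obtain ⟨c', ⟨hbc', hc'1⟩, hminc⟩ :=
    Int.exists_least_of_bdd (P := fun j => b ≤ j ∧ x j = true)
      ⟨b, fun z hz => hz.1⟩ ⟨c, le_of_lt hbc, hc⟩
  have hbc'' : b < c' := lt_of_le_of_ne hbc' (by rintro rfl; rw [hb] at hc'1; exact absurd hc'1 (by simp))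
  have hc'c : c' ≤ c := hminc c ⟨le_of_lt hbc, hc⟩
  -- zeros strictly between i and c'
  have hzero : ∀ j : ℤ, i < j → j < c' → x j = false := by
    intro j hj1 hj2
    by_contra h
    have hjt : x j = true := by
      cases hxx : x j with
      | false => exact absurd hxx h
      | true => rfl
    rcases le_or_gt j b with h1 | h1
    · exact absurd (hmax j ⟨h1, hjt⟩) (not_le.mpr hj1)
    · exact absurd (hminc j ⟨le_of_lt h1, hjt⟩) (not_le.mpr hj2)
  -- least e ≥ c' with x e = false
  obtain ⟨e, ⟨hce, he0⟩, hmine⟩ :=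
    Int.exists_least_of_bdd (P := fun j => c' ≤ j ∧ x j = false)
      ⟨c', fun z hz => hz.1⟩ ⟨d, le_trans hc'c (le_of_lt hcd), hd⟩
  have hce' : c' < e := lt_of_le_of_ne hce (by rintro rfl; rw [hc'1] at he0; exact absurd he0 (by simp))
  have hones : ∀ j : ℤ, c' ≤ j → j < e → x j = true := by
    intro j hj1 hj2
    by_contra h
    have hjf : x j = false := by
      cases hxx : x j with
      | false => rfl
      | true => exact absurd hxx h
    exact absurd (hmine j ⟨hj1, hjf⟩) (not_le.mpr hj2)
  -- forbidden word at i with m = c' - 1 - i, n = e - c'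
  refine hx i (c' - 1 - i) (e - c') (by omega) (by omega) ⟨hi1, ?_, ?_, ?_⟩
  · intro j hj1 hj2
    exact hzero (i + j) (by omega) (by omega)
  · intro j hj1 hj2
    exact hones (i + (c' - 1 - i) + j) (by omega) (by omega)
  · have : i + (c' - 1 - i) + (e - c') + 1 = e := by ring
    rw [this]; exact he0

/-- `x⁰` is not an ω-limit point of any point of `X₀`. -/
theorem xZero_not_omega_limit :
    ∀ x ∈ X0, ¬ MapClusterPt xZero atTop (fun n : ℕ => shiftMap^[n] x) := by
  intro x hx hcl
  set U : Set (ℤ → Bool) := {y | y (-1) = false ∧ y 0 = true} with hU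
  have hUopen : IsOpen U := by
    have : U = ((fun y : ℤ → Bool => y (-1)) ⁻¹' {false}) ∩ ((fun y : ℤ → Bool => y 0) ⁻¹' {true}) := by
      ext y; simp [hU]
    rw [this]
    exact ((continuous_apply (-1 : ℤ)).isOpen_preimage _ (isOpen_discrete _)).inter
      ((continuous_apply (0 : ℤ)).isOpen_preimage _ (isOpen_discrete _))
  have hxU : xZero ∈ U := by constructor <;> simp [xZero]
  have hfreq : ∃ᶠ n in atTop, (shiftMap^[n] x) ∈ U :=
    (mapClusterPt_iff_frequently.mp hcl) U (hUopen.mem_nhds hxU)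
  have key : ∀ n : ℕ, shiftMap^[n] x ∈ U → x ((n : ℤ) - 1) = false ∧ x (n : ℤ) = true := by
    intro n hn
    obtain ⟨h1, h2⟩ := hn
    rw [iterate_shiftMap] at h1 h2
    constructor
    · rw [show (n : ℤ) - 1 = -1 + n by ring]; exact h1
    · rw [show (n : ℤ) = 0 + n by ring]; exact h2
  rw [frequently_atTop] at hfreq
  obtain ⟨n1, -, hn1⟩ := hfreq 0
  obtain ⟨n2, hn12, hn2⟩ := hfreq (n1 + 1)
  obtain ⟨n3, hn23, hn3⟩ := hfreq (n2 + 1)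
  obtain ⟨_, h1t⟩ := key n1 hn1
  obtain ⟨h2f, h2t⟩ := key n2 hn2
  obtain ⟨h3f, _⟩ := key n3 hn3
  have hne1 : (n1 : ℤ) ≠ (n2 : ℤ) - 1 := by
    intro h; rw [h, h2f] at h1t; exact absurd h1t (by simp)
  have hne2 : (n2 : ℤ) ≠ (n3 : ℤ) - 1 := by
    intro h; rw [h, h3f] at h2t; exact absurd h2t (by simp)
  exact no_1010 x hx (n1 : ℤ) ((n2 : ℤ) - 1) (n2 : ℤ) ((n3 : ℤ) - 1)
    (by omega) (by omega) (by omega) h1t h2f h2t h3f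
end

section
/- There exist a nonempty compact metrizable topological space Y, a homeomorphism g : Y → Y, and a point p ∈ Y such that p is a non-wandering point of g (for every open set U containing p and every N ∈ ℕ there exist n > N and y ∈ U with g^n y ∈ U), yet p is not an ω-limit point of any point: for every q ∈ Y, p is not a cluster point of the sequence (g^n q)_{n∈ℕ} as n → ∞. In other words, for a general compact dynamical system the non-wandering set can be strictly larger than the union of all ω-limit sets. -/
open Filter Topology

/-- Sequences over `ℤ` with at most two `true` coordinates. -/
def myY : Set (ℤ → Bool) :=
  {x | ∀ a b c : ℤ, x a = true → x b = true → x c = true → a = b ∨ a = c ∨ b = c}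

lemma myY_closed : IsClosed myY := by
  have h : myY = ⋂ (a : ℤ) (b : ℤ) (c : ℤ),
      {x : ℤ → Bool | x a = true → x b = true → x c = true → a = b ∨ a = c ∨ b = c} := by
    ext x; simp [myY, Set.mem_iInter]
  rw [h]
  refine isClosed_iInter fun a => isClosed_iInter fun b => isClosed_iInter fun c => ?_
  by_cases hd : a = b ∨ a = c ∨ b = c
  · have : {x : ℤ → Bool | x a = true → x b = true → x c = true → a = b ∨ a = c ∨ b = c}
        = Set.univ := by ext x; simp [hd]
    rw [this]; exact isClosed_univ
  · have : {x : ℤ → Bool | x a = true → x b = true → x c = true → a = b ∨ a = c ∨ b = c}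
        = ({x : ℤ → Bool | x a = true} ∩ {x | x b = true} ∩ {x | x c = true})ᶜ := by
      ext x
      simp only [Set.mem_setOf_eq, Set.mem_compl_iff, Set.mem_inter_iff]
      tauto
    rw [this]
    refine IsOpen.isClosed_compl ?_
    have ho : ∀ a : ℤ, IsOpen {x : ℤ → Bool | x a = true} := by
      intro a
      show IsOpen ((fun x : ℤ → Bool => x a) ⁻¹' {true})
      exact (isOpen_discrete ({true} : Set Bool)).preimage (continuous_apply a)
    exact ((ho a).inter (ho b)).inter (ho c)

lemma shift_mem (x : ℤ → Bool) (hx : x ∈ myY) : (fun i => x (i + 1)) ∈ myY := by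
  intro a b c ha hb hc
  have := hx (a + 1) (b + 1) (c + 1) ha hb hc
  omega

lemma unshift_mem (x : ℤ → Bool) (hx : x ∈ myY) : (fun i => x (i - 1)) ∈ myY := by
  intro a b c ha hb hc
  have := hx (a - 1) (b - 1) (c - 1) ha hb hc
  omega

/-- The shift as a homeomorphism of `myY`. -/
def myG : myY ≃ₜ myY where
  toFun y := ⟨fun i => y.1 (i + 1), shift_mem y.1 y.2⟩
  invFun y := ⟨fun i => y.1 (i - 1), unshift_mem y.1 y.2⟩
  left_inv y := by
    ext i; show y.1 (i - 1 + 1) = y.1 i; congr 1; ring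
  right_inv y := by
    ext i; show y.1 (i + 1 - 1) = y.1 i; congr 1; ring
  continuous_toFun := by
    refine Continuous.subtype_mk ?_ _
    exact continuous_pi fun i => (continuous_apply (i + 1)).comp continuous_subtype_val
  continuous_invFun := by
    refine Continuous.subtype_mk ?_ _
    exact continuous_pi fun i => (continuous_apply (i - 1)).comp continuous_subtype_val

lemma myG_iterate (n : ℕ) (q : myY) (i : ℤ) :
    ((⇑myG)^[n] q).1 i = q.1 (i + n) := by
  induction n generalizing i with
  | zero => simp
  | succ n ih =>
    rw [Function.iterate_succ', Function.comp_apply]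
    show ((⇑myG)^[n] q).1 (i + 1) = q.1 (i + (n + 1 : ℕ))
    rw [ih]
    congr 1
    push_cast
    ring

/-- There is a nonempty compact metrizable dynamical system `(Y, g)` with a non-wandering
point `p` that is not an ω-limit point of any orbit: the non-wandering set can be strictly
larger than the union of all ω-limit sets. -/
theorem exists_nonwandering_not_omega_limit :
    ∃ (Y : Type) (_ : TopologicalSpace Y),
      CompactSpace Y ∧ TopologicalSpace.MetrizableSpace Y ∧ Nonempty Y ∧
      ∃ (g : Y ≃ₜ Y) (p : Y),
        (∀ U : Set Y, IsOpen U → p ∈ U → ∀ N : ℕ,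
          ∃ n : ℕ, N < n ∧ ∃ y ∈ U, (⇑g)^[n] y ∈ U) ∧
        (∀ q : Y, ¬ MapClusterPt p atTop (fun n : ℕ => (⇑g)^[n] q)) := by
  have pmem : (fun i : ℤ => decide (i = 0)) ∈ myY := by
    intro a b c ha hb hc
    simp only [decide_eq_true_eq] at ha hb hc
    omega
  refine ⟨myY, inferInstance, ?_, ?_, ⟨⟨_, pmem⟩⟩, myG, ⟨_, pmem⟩, ?_, ?_⟩
  · exact isCompact_iff_compactSpace.mp myY_closed.isCompact
  · infer_instance
  · -- non-wandering
    intro U hU hpU N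
    rw [isOpen_induced_iff] at hU
    obtain ⟨V, hV, rfl⟩ := hU
    have hpV : (fun i : ℤ => decide (i = 0)) ∈ V := hpU
    have hVn : V ∈ 𝓝 (fun i : ℤ => decide (i = 0)) := hV.mem_nhds hpV
    rw [nhds_pi, Filter.mem_pi] at hVn
    obtain ⟨I, hIfin, t, ht, hsub⟩ := hVn
    -- bound the finite set I
    obtain ⟨m, hm⟩ : ∃ m : ℕ, ∀ i ∈ I, i.natAbs ≤ m := by
      obtain ⟨m, hm⟩ := (hIfin.image Int.natAbs).bddAbove
      exact ⟨m, fun i hi => hm ⟨i, hi, rfl⟩⟩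
    set n : ℕ := max N m + 1 with hn
    have hnN : N < n := by omega
    have hnm : m < n := by omega
    have key : ∀ x : ℤ → Bool, (∀ i ∈ I, x i = decide (i = 0)) → x ∈ V := by
      intro x hx
      apply hsub
      intro i hi
      rw [hx i hi]
      have := ht i
      rwa [nhds_discrete, Filter.mem_pure] at this
    have ymem : (fun i : ℤ => decide (i = 0 ∨ i = (n : ℤ))) ∈ myY := by
      intro a b c ha hb hc
      simp only [decide_eq_true_eq] at ha hb hc
      rcases ha with ha | ha <;> rcases hb with hb | hb <;> rcases hc with hc | hc <;> omega
    refine ⟨n, hnN, ⟨_, ymem⟩, ?_, ?_⟩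
    · -- y ∈ U
      show (fun i : ℤ => decide (i = 0 ∨ i = (n : ℤ))) ∈ V
      apply key
      intro i hi
      have hib : i.natAbs ≤ m := hm i hi
      have hne : i ≠ (n : ℤ) := by omega
      simp only [decide_eq_decide]
      constructor
      · rintro (h | h); exact h; exact absurd h hne
      · intro h; exact Or.inl h
    · -- g^[n] y ∈ U
      show ((⇑myG)^[n] ⟨_, ymem⟩).1 ∈ V
      apply key
      intro i hi
      rw [myG_iterate]
      have hib : i.natAbs ≤ m := hm i hi
      show decide (i + (n : ℤ) = 0 ∨ i + (n : ℤ) = (n : ℤ)) = decide (i = 0)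
      simp only [decide_eq_decide]
      constructor
      · rintro (h | h)
        · omega
        · omega
      · intro h; omega
  · -- not an ω-limit point of any orbit
    intro q hq
    have hVopen : IsOpen {y : myY | y.1 0 = true} := by
      have : Continuous fun y : myY => y.1 (0 : ℤ) :=
        (continuous_apply (0 : ℤ)).comp continuous_subtype_val
      show IsOpen ((fun y : myY => y.1 (0 : ℤ)) ⁻¹' {true})
      exact (isOpen_discrete ({true} : Set Bool)).preimage this
    have hpV : (⟨_, pmem⟩ : myY) ∈ {y : myY | y.1 0 = true} := by
      show decide ((0 : ℤ) = 0) = true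
      simp
    have hmem : {y : myY | y.1 0 = true} ∈ 𝓝 (⟨_, pmem⟩ : myY) := hVopen.mem_nhds hpV
    have hfreq : ∃ᶠ n in atTop, ((⇑myG)^[n] q) ∈ {y : myY | y.1 0 = true} :=
      mapClusterPt_iff_frequently.mp hq _ hmem
    have hfreq' : ∀ N : ℕ, ∃ n ≥ N, q.1 (n : ℤ) = true := by
      intro N
      obtain ⟨n, hn, h⟩ := (Filter.frequently_atTop.mp hfreq) N
      refine ⟨n, hn, ?_⟩
      have := h
      rw [Set.mem_setOf_eq, myG_iterate] at this
      simpa using this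
    obtain ⟨n1, _, h1⟩ := hfreq' 0
    obtain ⟨n2, hn2, h2⟩ := hfreq' (n1 + 1)
    obtain ⟨n3, hn3, h3⟩ := hfreq' (n2 + 1)
    have := q.2 (n1 : ℤ) (n2 : ℤ) (n3 : ℤ) h1 h2 h3
    omega
end
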